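/- Let K ⊆ L be finite fields with [L : K] = m, let β = (β₁, …, β_m) be a basis of L over K, and let β^⊥ = (β₁^⊥, …, β_m^⊥) be the dual basis of β with respect to the trace form, i.e., Tr_{L/K}(β_i β_j^⊥) = δ_{ij}. For a basis γ of L over K, let Φ_γ : Lⁿ → K^{n×m} denote the K-linear expansion map sending c = (c₁, …, c_n) to the tuple whose (i, j)-entry is the j-th coordinate of c_i with respect to γ. Then for every L-linear code C ⊆ Lⁿ, the Euclidean dual over K of the expanded code Φ_β(C) equals the expansion with respect to the dual basis of the Euclidean dual of C over L: (Φ_β(C))^⊥ = Φ_{β^⊥}(C^⊥). (This is the identity [β(C)]^⊥ = β^⊥(C^⊥) used in the proof that code expansion yields asymptotically good quantum codes over prime fields.) -/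

import Mathlib

/-- The Euclidean dual of a code `C ⊆ Rⁱ` (as a set):
all vectors whose standard dot product with every codeword is zero. -/
def eucDual {R : Type*} [CommRing R] {ι : Type*} [Fintype ι] (C : Set (ι → R)) :
    Set (ι → R) :=
  {v | ∀ c ∈ C, ∑ i, v i * c i = 0}

/-- The expansion of a vector `c ∈ Lⁿ` with respect to a `K`-basis `γ` of `L`:
the `(i, j)` entry is the `j`-th coordinate of `c i` with respect to `γ`. -/
noncomputable def expand {K L : Type*} [Field K] [Field L] [Algebra K L] {m : ℕ}
    (γ : Module.Basis (Fin m) K L) {n : ℕ} (c : Fin n → L) : Fin n × Fin m → K :=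
  fun p => γ.repr (c p.1) p.2

/-- For finite fields `K ⊆ L` with `[L : K] = m`, a basis `β` of `L` over `K` and its
trace-dual basis `β'`, the Euclidean dual over `K` of the expansion of an `L`-linear
code `C` with respect to `β` equals the expansion with respect to `β'` of the
Euclidean dual of `C` over `L`:  `(Φ_β(C))^⊥ = Φ_{β^⊥}(C^⊥)`. -/
theorem dual_of_expanded_code
    (K L : Type*) [Field K] [Field L] [Algebra K L] [Fintype K] [Fintype L]
    (m n : ℕ) (hm : Module.finrank K L = m)
    (β β' : Module.Basis (Fin m) K L)
    (hdual : ∀ i j, Algebra.trace K L (β i * β' j) = if i = j then 1 else 0)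
    (C : Submodule L (Fin n → L)) :
    eucDual (expand β '' (C : Set (Fin n → L))) =
      expand β' '' eucDual (C : Set (Fin n → L)) := by
  classical
  have trace_key : ∀ (j : Fin m) (x : L),
      Algebra.trace K L (β' j * x) = β.repr x j := by
    intro j x
    conv_lhs => rw [← β.sum_repr x]
    rw [Finset.mul_sum, map_sum]
    have h1 : ∀ k ∈ Finset.univ, Algebra.trace K L (β' j * β.repr x k • β k)
        = if k = j then β.repr x k else 0 := by
      intro k _
      rw [mul_smul_comm, map_smul, mul_comm, hdual k j, smul_eq_mul]
      split <;> simp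
    rw [Finset.sum_congr rfl h1, Finset.sum_ite_eq' Finset.univ j]
    simp
  have key : ∀ (w c : Fin n → L),
      ∑ p : Fin n × Fin m, (β'.repr (w p.1) p.2) * expand β c p =
        Algebra.trace K L (∑ i, w i * c i) := by
    intro w c
    rw [map_sum, Fintype.sum_prod_type]
    refine Finset.sum_congr rfl fun i _ => ?_
    conv_rhs => rw [← β'.sum_repr (w i)]
    rw [Finset.sum_mul, map_sum]
    refine Finset.sum_congr rfl fun j _ => ?_
    rw [smul_mul_assoc, map_smul, trace_key j (c i), smul_eq_mul]
    rfl
  ext v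
  constructor
  · intro hv
    set w : Fin n → L := fun i => ∑ j, v (i, j) • β' j with hw
    have hrepr : ∀ i j, β'.repr (w i) j = v (i, j) := by
      intro i j
      simp [hw, map_sum, Finsupp.single_apply]
    refine ⟨w, ?_, ?_⟩
    · intro c hc
      have hz : ∀ j, β.repr (∑ i, w i * c i) j = 0 := by
        intro j
        rw [← trace_key j]
        have hcj : (β' j • c) ∈ (C : Set (Fin n → L)) := C.smul_mem _ hc
        have hv' := hv (expand β (β' j • c)) ⟨β' j • c, hcj, rfl⟩
        calc Algebra.trace K L (β' j * ∑ i, w i * c i)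
            = Algebra.trace K L (∑ i, w i * (β' j • c) i) := by
              rw [Finset.mul_sum]
              refine congrArg _ (Finset.sum_congr rfl fun i _ => ?_)
              simp only [Pi.smul_apply, smul_eq_mul]
              ring
          _ = ∑ p : Fin n × Fin m, (β'.repr (w p.1) p.2) * expand β (β' j • c) p :=
              (key w (β' j • c)).symm
          _ = ∑ p : Fin n × Fin m, v p * expand β (β' j • c) p := by
              refine Finset.sum_congr rfl fun p _ => ?_
              rw [hrepr]
          _ = 0 := hv'
      have hz' : β.repr (∑ i, w i * c i) = 0 := by
        ext j; simpa using hz j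
      exact (LinearEquiv.map_eq_zero_iff β.repr).mp hz'
    · funext p
      exact hrepr p.1 p.2
  · rintro ⟨w, hwC, rfl⟩ c' ⟨c, hc, rfl⟩
    show ∑ p : Fin n × Fin m, (β'.repr (w p.1) p.2) * expand β c p = 0
    rw [key w c, hwC c hc, map_zero]
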